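/- Let B be a C*-algebra, J ⊆ B a closed two-sided ideal, and Z ⊆ B a closed subspace such that Z* Z ⊆ J. Then Z ⊆ closure(Z·J); in particular, if C is another closed subspace with Z·J ⊆ C·J then Z ⊆ closure(C·J). -/

import Mathlib

private theorem subset_closure_aux {B : Type*} [NonUnitalNormedRing B] [StarRing B]
    [CStarRing B] [NormedSpace ℂ B] [IsScalarTower ℂ B B] [SMulCommClass ℂ B B]
    [StarModule ℂ B] [CompleteSpace B]
    (J : TwoSidedIdeal B)
    (Z : Submodule ℂ B)
    (hZJ : ∀ z₁ ∈ Z, ∀ z₂ ∈ Z, star z₁ * z₂ ∈ J) :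
    (Z : Set B) ⊆
        closure (Submodule.span ℂ {x : B | ∃ z ∈ Z, ∃ j ∈ J, x = z * j} : Set B) := by
  letI : NonUnitalCStarAlgebra B := { }
  intro z hz
  set a : B := star z * z with ha_def
  have haJ : a ∈ J := hZJ z hz z hz
  have hsa : IsSelfAdjoint a := IsSelfAdjoint.star_mul_self z
  have hspec : ∀ t ∈ quasispectrum ℝ a, 0 ≤ t := by
    rw [Unitization.quasispectrum_eq_spectrum_inr' ℝ ℂ]
    intro t ht
    rw [ha_def, Unitization.inr_mul, Unitization.inr_star] at ht
    exact spectrum_star_mul_self_nonneg t ht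
  rw [Metric.mem_closure_iff]
  intro ε hε
  obtain ⟨δ, hδ, hδε⟩ : ∃ δ : ℝ, 0 < δ ∧ δ ≤ (ε / 2) ^ 2 :=
    ⟨(ε / 2) ^ 2, by positivity, le_refl _⟩
  set f : ℝ → ℝ := fun t => t ^ 2 * (t ^ 2 + δ ^ 2)⁻¹ with hf_def
  set g : ℝ → ℝ := fun t => t * (t ^ 2 + δ ^ 2)⁻¹ with hg_def
  have hne : ∀ t : ℝ, t ^ 2 + δ ^ 2 ≠ 0 := fun t => by positivity
  have hgc : Continuous g :=
    continuous_id.mul ((continuous_pow 2 |>.add continuous_const).inv₀ hne)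
  have hfc : Continuous f :=
    (continuous_pow 2).mul ((continuous_pow 2 |>.add continuous_const).inv₀ hne)
  have hf0 : f 0 = 0 := by simp [hf_def]
  have hg0 : g 0 = 0 := by simp [hg_def]
  set e : B := cfcₙ f a with he_def
  have heJ : e ∈ J := by
    have he2 : e = a * cfcₙ g a := by
      rw [he_def]
      calc cfcₙ f a = cfcₙ (fun t : ℝ => id t * g t) a := by
            apply cfcₙ_congr; intro t _
            simp only [hf_def, hg_def, id_eq]; ring
        _ = cfcₙ (id : ℝ → ℝ) a * cfcₙ g a :=
            cfcₙ_mul _ _ a continuousOn_id (by simp) hgc.continuousOn hg0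
        _ = a * cfcₙ g a := by rw [cfcₙ_id ℝ a]
    rw [he2]
    exact J.mul_mem_right _ _ haJ
  have hesa : IsSelfAdjoint e := cfcₙ_predicate f a
  have hid : Continuous (fun t : ℝ => t) := continuous_id
  have key : star (z - z * e) * (z - z * e) = cfcₙ (fun t => t * (1 - f t) ^ 2) a := by
    have expand : cfcₙ (fun t : ℝ => ((fun s : ℝ => s - s * f s) t - (fun s => f s * s) t)
          + (fun s => f s * s * f s) t) a = a - a * e - e * a + e * a * e := by
      rw [cfcₙ_add (fun t : ℝ => t - t * f t - f t * t) (fun t : ℝ => f t * t * f t) a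
          ((hid.sub (hid.mul hfc)).sub (hfc.mul hid)).continuousOn (by simp [hf_def])
          ((hfc.mul hid).mul hfc).continuousOn (by simp [hf_def]),
        cfcₙ_sub (fun t : ℝ => t - t * f t) (fun t : ℝ => f t * t) a (hid.sub (hid.mul hfc)).continuousOn (by simp [hf_def])
          (hfc.mul hid).continuousOn (by simp [hf_def]),
        cfcₙ_sub (fun t : ℝ => t) (fun t : ℝ => t * f t) a hid.continuousOn (by simp)
          (hid.mul hfc).continuousOn (by simp [hf_def]),
        cfcₙ_mul _ _ a hid.continuousOn (by simp) hfc.continuousOn hf0,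
        cfcₙ_mul (fun t : ℝ => f t * t) f a (hfc.mul hid).continuousOn (by simp [hf_def])
          hfc.continuousOn hf0,
        cfcₙ_mul _ _ a hfc.continuousOn hf0 hid.continuousOn (by simp),
        cfcₙ_id' ℝ a]
    have hcongr : cfcₙ (fun t : ℝ => t * (1 - f t) ^ 2) a
        = cfcₙ (fun t : ℝ => ((fun s : ℝ => s - s * f s) t - (fun s => f s * s) t)
          + (fun s => f s * s * f s) t) a := by
      apply cfcₙ_congr; intro t _; simp only; ring
    rw [hcongr, expand]
    rw [star_sub, star_mul, hesa.star_eq, ha_def]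
    noncomm_ring
  have hbound : ‖star (z - z * e) * (z - z * e)‖ ≤ δ := by
    rw [key]
    apply norm_cfcₙ_le
    intro t ht
    have ht0 : 0 ≤ t := hspec t ht
    have h1f : 1 - f t = δ ^ 2 * (t ^ 2 + δ ^ 2)⁻¹ := by
      simp only [hf_def]
      field_simp
      ring
    rw [h1f, Real.norm_eq_abs, abs_of_nonneg (by positivity)]
    rw [show δ ^ 2 * (t ^ 2 + δ ^ 2)⁻¹ = δ ^ 2 / (t ^ 2 + δ ^ 2) from
        (div_eq_mul_inv _ _).symm, div_pow, ← mul_div_assoc, div_le_iff₀ (by positivity)]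
    nlinarith [mul_nonneg (pow_nonneg hδ.le 3) (sq_nonneg (t - δ)), sq_nonneg t, sq_nonneg δ,
      mul_nonneg hδ.le (pow_nonneg ht0 4),
      mul_nonneg ht0 (pow_nonneg hδ.le 4),
      mul_nonneg (sq_nonneg t) (pow_nonneg hδ.le 3)]
  have hnorm : ‖z - z * e‖ ≤ ε / 2 := by
    have h2 : ‖z - z * e‖ ^ 2 ≤ δ := by
      rwa [sq, ← CStarRing.norm_star_mul_self]
    have h3 := Real.sqrt_le_sqrt (h2.trans hδε)
    rwa [Real.sqrt_sq (norm_nonneg _), Real.sqrt_sq (by positivity)] at h3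
  refine ⟨z * e, ?_, ?_⟩
  · exact Submodule.subset_span ⟨z, hz, e, heJ, rfl⟩
  · rw [dist_eq_norm]
    calc ‖z - z * e‖ ≤ ε / 2 := hnorm
      _ < ε := by linarith



/-- Let `B` be a C*-algebra, `J ⊆ B` a closed two-sided ideal and
`Z ⊆ B` a closed subspace with `Z* Z ⊆ J`.  Then `Z ⊆ closure (Z·J)`; in particular,
if `C` is another closed subspace with `Z·J ⊆ C·J`, then `Z ⊆ closure (C·J)`.
Here `X·J` denotes the linear span of products `x*j`, `x ∈ X`, `j ∈ J`. -/
theorem subset_closure_mul_ideal {B : Type*} [NonUnitalNormedRing B] [StarRing B]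
    [CStarRing B] [NormedSpace ℂ B] [IsScalarTower ℂ B B] [SMulCommClass ℂ B B]
    [StarModule ℂ B] [CompleteSpace B]
    (J : TwoSidedIdeal B) (hJ : IsClosed (J : Set B))
    (Z : Submodule ℂ B) (hZ : IsClosed (Z : Set B))
    (hZJ : ∀ z₁ ∈ Z, ∀ z₂ ∈ Z, star z₁ * z₂ ∈ J) :
    (Z : Set B) ⊆
        closure (Submodule.span ℂ {x : B | ∃ z ∈ Z, ∃ j ∈ J, x = z * j} : Set B) ∧
      ∀ C : Submodule ℂ B, IsClosed (C : Set B) →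
        Submodule.span ℂ {x : B | ∃ z ∈ Z, ∃ j ∈ J, x = z * j} ≤
          Submodule.span ℂ {x : B | ∃ c ∈ C, ∃ j ∈ J, x = c * j} →
        (Z : Set B) ⊆
          closure (Submodule.span ℂ {x : B | ∃ c ∈ C, ∃ j ∈ J, x = c * j} : Set B) := by
  have main := subset_closure_aux J Z hZJ
  refine ⟨main, fun C _ hle z hz => ?_⟩
  exact closure_mono (SetLike.coe_subset_coe.mpr hle) (main hz)
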